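/- For every regular sequence (h_n) of functions on [0,1], the set {x ∈ [0,1] : there exists C ∈ ℝ such that h_n(x) < C·(3/4)^n for all n ∈ ℕ} is almost full. -/

import Mathlib

open MeasureTheory Filter Set

noncomputable section

/-- A sequence of functions on `[0,1]` is *regular* if each member is continuous and
nonnegative on `[0,1]` and has integral over `[0,1]` strictly less than `2⁻ⁿ`. -/
def RegularSeq (h : ℕ → ℝ → ℝ) : Prop :=
  ∀ n : ℕ, ContinuousOn (h n) (Set.Icc 0 1) ∧
    (∀ x ∈ Set.Icc (0:ℝ) 1, 0 ≤ h n x) ∧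
    (∫ x in (0:ℝ)..1, h n x) < (1/2 : ℝ) ^ n

/-- The set `Ω(𝔥)` of points of `[0,1]` at which the partial sums of `∑ hₙ(x)` are
bounded above. -/
def Omega (h : ℕ → ℝ → ℝ) : Set ℝ :=
  {x ∈ Set.Icc (0:ℝ) 1 | ∃ γ : ℝ, ∀ m : ℕ, ∑ n ∈ Finset.range (m+1), h n x ≤ γ}

/-- A subset `X ⊆ [0,1]` is *almost full* if `Ω(𝔥) ⊆ X` for some regular sequence `𝔥`. -/
def AlmostFull (X : Set ℝ) : Prop :=
  ∃ h : ℕ → ℝ → ℝ, RegularSeq h ∧ Omega h ⊆ X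

private lemma aux_int6 {f : ℝ → ℝ} (hf : ContinuousOn f (Set.Icc 0 1)) :
    IntervalIntegrable f MeasureTheory.volume 0 1 := by
  apply ContinuousOn.intervalIntegrable
  rwa [Set.uIcc_of_le (by norm_num : (0:ℝ) ≤ 1)]

/-- For every regular sequence `(hₙ)`, the set of `x ∈ [0,1]` such that
`hₙ(x) < C·(3/4)ⁿ` for some constant `C` and all `n` is almost full. -/
theorem stmt6 (h : ℕ → ℝ → ℝ) (hreg : RegularSeq h) :
    AlmostFull {x ∈ Set.Icc (0:ℝ) 1 |
      ∃ C : ℝ, ∀ n : ℕ, h n x < C * (3/4 : ℝ)^n} := by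
  classical
  set p : ℕ → ℝ → ℝ := fun m x => min ((4/3:ℝ)^m * h m x) 1 with hp
  have einv : ∀ m : ℕ, (3/4:ℝ)^m * (4/3)^m = 1 := by
    intro m; rw [← mul_pow]; norm_num
  have pcont : ∀ m, ContinuousOn (p m) (Set.Icc 0 1) := by
    intro m
    have := ContinuousOn.inf ((continuousOn_const (c := (4/3:ℝ)^m)).mul (hreg m).1)
      (continuousOn_const : ContinuousOn (fun _ : ℝ => (1:ℝ)) (Set.Icc 0 1))
    simpa using this
  have pnonneg : ∀ m, ∀ x ∈ Set.Icc (0:ℝ) 1, 0 ≤ p m x := by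
    intro m x hx
    exact le_min (mul_nonneg (by positivity) ((hreg m).2.1 x hx)) zero_le_one
  have pint : ∀ m, IntervalIntegrable (p m) volume 0 1 := fun m => aux_int6 (pcont m)
  have hint' : ∀ m : ℕ, IntervalIntegrable (fun x => (4/3:ℝ)^m * h m x) volume 0 1 :=
    fun m => (aux_int6 (hreg m).1).const_mul _
  have pintlt : ∀ m, (∫ x in (0:ℝ)..1, p m x) < (2/3:ℝ)^m := by
    intro m
    have h1 : (∫ x in (0:ℝ)..1, p m x) ≤ ∫ x in (0:ℝ)..1, (4/3:ℝ)^m * h m x := by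
      apply intervalIntegral.integral_mono_on (by norm_num) (pint m) (hint' m)
      intro x _; exact min_le_left _ _
    have h2 : (∫ x in (0:ℝ)..1, (4/3:ℝ)^m * h m x)
        = (4/3:ℝ)^m * ∫ x in (0:ℝ)..1, h m x :=
      intervalIntegral.integral_const_mul _ _
    have h3 := (hreg m).2.2
    have h4 : (4/3:ℝ)^m * ((1/2:ℝ)^m) = (2/3:ℝ)^m := by
      rw [← mul_pow]; norm_num
    calc (∫ x in (0:ℝ)..1, p m x)
        ≤ (4/3:ℝ)^m * ∫ x in (0:ℝ)..1, h m x := by rw [← h2]; exact h1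
      _ < (4/3:ℝ)^m * (1/2:ℝ)^m :=
          mul_lt_mul_of_pos_left h3 (by positivity)
      _ = (2/3:ℝ)^m := h4
  set g : ℕ → ℝ → ℝ := fun n x => p (2*n+2) x + p (2*n+3) x with hg
  refine ⟨g, ?_, ?_⟩
  · intro n
    refine ⟨(pcont _).add (pcont _),
      fun x hx => add_nonneg (pnonneg _ x hx) (pnonneg _ x hx), ?_⟩
    have hadd : (∫ x in (0:ℝ)..1, g n x)
        = (∫ x in (0:ℝ)..1, p (2*n+2) x) + ∫ x in (0:ℝ)..1, p (2*n+3) x :=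
      intervalIntegral.integral_add (pint _) (pint _)
    have e1 := pintlt (2*n+2)
    have e2 := pintlt (2*n+3)
    have hpow1 : ((2:ℝ)/3)^(2*n+2) = (4/9:ℝ)^n * (4/9) := by
      rw [pow_add, pow_mul]; norm_num
    have hpow2 : ((2:ℝ)/3)^(2*n+3) = (4/9:ℝ)^n * (8/27) := by
      rw [pow_add, pow_mul]; norm_num
    have h49 : ((4:ℝ)/9)^n ≤ (1/2:ℝ)^n :=
      pow_le_pow_left₀ (by norm_num) (by norm_num) n
    have hbpos : (0:ℝ) ≤ (1/2:ℝ)^n := by positivity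
    rw [hadd]
    rw [hpow1] at e1; rw [hpow2] at e2
    linarith
  · rintro x ⟨hx, γ, hγ⟩
    refine ⟨hx, ?_⟩
    have gnonneg : ∀ n, 0 ≤ g n x := fun n =>
      add_nonneg (pnonneg _ x hx) (pnonneg _ x hx)
    have sumF : ∀ F : Finset ℕ, (∑ n ∈ F, g n x) ≤ γ := by
      intro F
      calc (∑ n ∈ F, g n x) ≤ ∑ n ∈ Finset.range (F.sup id + 1), g n x := by
            apply Finset.sum_le_sum_of_subset_of_nonneg
            · intro n hn
              exact Finset.mem_range.2 (Nat.lt_succ_of_le (Finset.le_sup (f := id) hn))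
            · intro n _ _; exact gnonneg n
        _ ≤ γ := hγ _
    have hfin : {n : ℕ | 1 ≤ g n x}.Finite := by
      by_contra hinf
      obtain ⟨F, hFsub, hFcard⟩ :=
        (Set.Infinite.exists_subset_card_eq hinf (⌈γ⌉₊ + 1))
      have h1 : (F.card : ℝ) ≤ ∑ n ∈ F, g n x := by
        calc (F.card : ℝ) = ∑ _n ∈ F, (1:ℝ) := by simp
          _ ≤ ∑ n ∈ F, g n x := Finset.sum_le_sum fun n hn => hFsub hn
      have h2 := Nat.le_ceil γ
      rw [hFcard] at h1
      push_cast at h1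
      linarith [sumF F]
    obtain ⟨B, hB⟩ := hfin.bddAbove
    have hlt1 : ∀ n, B < n → g n x < 1 := by
      intro n hn
      by_contra hle
      exact absurd (hB (not_lt.mp hle)) (not_le.2 hn)
    have hsmall : ∀ m, 2*(B+1)+2 ≤ m → h m x < (3/4:ℝ)^m := by
      intro m hm
      obtain ⟨n, hn, hcase⟩ : ∃ n, B < n ∧ (m = 2*n+2 ∨ m = 2*n+3) := by
        rcases Nat.even_or_odd m with ⟨k, hk⟩ | ⟨k, hk⟩
        · exact ⟨k - 1, by omega, Or.inl (by omega)⟩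
        · exact ⟨k - 1, by omega, Or.inr (by omega)⟩
      have hg1 := hlt1 n hn
      have hterm : p m x < 1 := by
        rcases hcase with rfl | rfl
        · have h0 := pnonneg (2*n+3) x hx
          calc p (2*n+2) x ≤ g n x := le_add_of_nonneg_right h0
            _ < 1 := hg1
        · have h0 := pnonneg (2*n+2) x hx
          calc p (2*n+3) x ≤ g n x := le_add_of_nonneg_left h0
            _ < 1 := hg1
      have key : (4/3:ℝ)^m * h m x < 1 := by
        by_contra hge
        push_neg at hge
        have : p m x = 1 := min_eq_right hge
        rw [this] at hterm
        exact lt_irrefl 1 hterm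
      have hm2 := mul_lt_mul_of_pos_left key (show (0:ℝ) < (3/4:ℝ)^m by positivity)
      calc h m x = (3/4:ℝ)^m * ((4/3:ℝ)^m * h m x) := by
            rw [← mul_assoc, einv m, one_mul]
        _ < (3/4:ℝ)^m * 1 := hm2
        _ = (3/4:ℝ)^m := mul_one _
    set M := 2*(B+1)+2 with hM
    set C : ℝ := 1 + ∑ m ∈ Finset.range M, (4/3:ℝ)^m * h m x with hC
    have hsumnn : (0:ℝ) ≤ ∑ m ∈ Finset.range M, (4/3:ℝ)^m * h m x :=
      Finset.sum_nonneg fun i _ => mul_nonneg (by positivity) ((hreg i).2.1 x hx)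
    have hC1 : (1:ℝ) ≤ C := by rw [hC]; linarith
    refine ⟨C, ?_⟩
    intro m
    by_cases hm : M ≤ m
    · have h1 := hsmall m hm
      have h2 : (1:ℝ) * (3/4:ℝ)^m ≤ C * (3/4:ℝ)^m :=
        mul_le_mul_of_nonneg_right hC1 (by positivity)
      calc h m x < (3/4:ℝ)^m := h1
        _ = 1 * (3/4:ℝ)^m := (one_mul _).symm
        _ ≤ C * (3/4:ℝ)^m := h2
    · push_neg at hm
      have hmem : m ∈ Finset.range M := Finset.mem_range.2 hm
      have h1 : (4/3:ℝ)^m * h m x ≤ ∑ i ∈ Finset.range M, (4/3:ℝ)^i * h i x :=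
        Finset.single_le_sum (f := fun i => (4/3:ℝ)^i * h i x)
          (fun i _ => mul_nonneg (by positivity) ((hreg i).2.1 x hx)) hmem
      have h2 : (4/3:ℝ)^m * h m x < C := by rw [hC]; linarith
      have h3 := mul_lt_mul_of_pos_left h2 (show (0:ℝ) < (3/4:ℝ)^m by positivity)
      calc h m x = (3/4:ℝ)^m * ((4/3:ℝ)^m * h m x) := by
            rw [← mul_assoc, einv m, one_mul]
        _ < (3/4:ℝ)^m * C := h3
        _ = C * (3/4:ℝ)^m := mul_comm _ _
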